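/- Let k ≥ 1 be an integer. Any finite simple C4-free graph with minimum degree at least k + 1 contains k pairwise vertex-disjoint cycles. -/

import Mathlib

open Finset
open scoped Classical

variable {V : Type*}

/-- `nbrIn G A x` is the number of neighbors of `x` lying in `A`, i.e. `d_A(x)`. -/
noncomputable def nbrIn (G : SimpleGraph V) (A : Finset V) (x : V) : ℕ :=
  (A.filter fun y => G.Adj x y).card

/-- `G` contains no cycle of length four: there are no four distinct vertices
`w,x,y,z` with `wx, xy, yz, zw` all edges. -/
def C4Free (G : SimpleGraph V) : Prop :=
  ∀ w x y z : V, w ≠ x → w ≠ y → w ≠ z → x ≠ y → x ≠ z → y ≠ z →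
    ¬(G.Adj w x ∧ G.Adj x y ∧ G.Adj y z ∧ G.Adj z w)

/-- `A` is `f`-good: every vertex of `A` has at least `f u` neighbors in `A`. -/
def IsGood (G : SimpleGraph V) (f : V → ℕ) (A : Finset V) : Prop :=
  ∀ u ∈ A, f u ≤ nbrIn G A u

/-- `A` is `g`-degenerate: every non-empty subset `H ⊆ A` has a vertex `u`
with `d_H(u) ≤ g u`. -/
def IsDegenerate (G : SimpleGraph V) (g : V → ℤ) (A : Finset V) : Prop :=
  ∀ H ⊆ A, H.Nonempty → ∃ u ∈ H, (nbrIn G H u : ℤ) ≤ g u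

/-- `(A,B)` is a partition of the vertex set: disjoint, non-empty, covering. -/
def IsPartition [Fintype V] (A B : Finset V) : Prop :=
  Disjoint A B ∧ A.Nonempty ∧ B.Nonempty ∧ A ∪ B = Finset.univ

/-- `(A,B)` is a feasible pair: disjoint non-empty sets with `A` being `a`-good
and `B` being `b`-good. -/
def FeasiblePair (G : SimpleGraph V) (a b : V → ℕ) (A B : Finset V) : Prop :=
  Disjoint A B ∧ A.Nonempty ∧ B.Nonempty ∧ IsGood G a A ∧ IsGood G b B

/-- `(A,B)` is an `(a,b)`-partition: a partition with `A` being `(a-1)`-degenerate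
and `B` being `(b-1)`-degenerate. -/
def ABPartition [Fintype V] (G : SimpleGraph V) (a b : V → ℕ) (A B : Finset V) : Prop :=
  IsPartition A B ∧ IsDegenerate G (fun x => (a x : ℤ) - 1) A ∧
    IsDegenerate G (fun x => (b x : ℤ) - 1) B

/-- The number of edges of the subgraph of `G` induced on `A`. -/
noncomputable def edgesIn (G : SimpleGraph V) (A : Finset V) : ℕ :=
  ((A ×ˢ A).filter fun p => G.Adj p.1 p.2).card / 2

/-- The weight `w(A,B) = |E(G[A])| + |E(G[B])| + Σ_{x∈A} b(x) + Σ_{x∈B} a(x)`. -/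
noncomputable def weight (G : SimpleGraph V) (a b : V → ℕ) (A B : Finset V) : ℕ :=
  edgesIn G A + edgesIn G B + ∑ x ∈ A, b x + ∑ x ∈ B, a x

/-- `(A,B)` belongs to `𝒫`: it is an `(a,b)`-partition of maximum weight among
all `(a,b)`-partitions. -/
def MaxAB [Fintype V] (G : SimpleGraph V) (a b : V → ℕ) (A B : Finset V) : Prop :=
  ABPartition G a b A B ∧
    ∀ A' B' : Finset V, ABPartition G a b A' B' → weight G a b A' B' ≤ weight G a b A B

/-- `starSet G f A` is `A* = {x ∈ A : d_A(x) ≤ f(x) - 1}`. -/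
noncomputable def starSet (G : SimpleGraph V) (f : V → ℕ) (A : Finset V) : Finset V :=
  A.filter fun x => nbrIn G A x < f x

section Helpers
open SimpleGraph SimpleGraph.Walk
variable {W : Type*} {H : SimpleGraph W}


variable {W : Type*} {H : SimpleGraph W}

namespace DCaux

/-- edge at the start of a path determines the second vertex -/
lemma edge_start {u v y : W} {p : H.Walk u v} (hp : p.IsPath) (h : s(u, y) ∈ p.edges) :
    y = p.getVert 1 := by
  induction p with
  | nil => simp at h
  | cons ha q ih =>
    rename_i a b c
    rw [SimpleGraph.Walk.edges_cons, List.mem_cons] at h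
    rcases h with h | h
    · rw [Sym2.eq_iff] at h
      rcases h with ⟨_, rfl⟩ | ⟨h1, h2⟩
      · simp [SimpleGraph.Walk.getVert]
      · exact absurd h1 ha.ne
    · exact absurd (SimpleGraph.Walk.fst_mem_support_of_mem_edges q h)
        ((SimpleGraph.Walk.cons_isPath_iff _ _).mp hp).2

/-- takeUntil and dropUntil through a cons, when target differs from start -/
lemma takeUntil_cons {a b v y : W} (ha : H.Adj a b) (q : H.Walk b v)
    (hy : y ∈ (SimpleGraph.Walk.cons ha q).support) (hya : y ≠ a) :
    ∃ hy' : y ∈ q.support,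
      (SimpleGraph.Walk.cons ha q).takeUntil y hy
          = SimpleGraph.Walk.cons ha (q.takeUntil y hy') ∧
      (SimpleGraph.Walk.cons ha q).dropUntil y hy = q.dropUntil y hy' := by
  have hy' : y ∈ q.support := by
    simp only [SimpleGraph.Walk.support_cons, List.mem_cons] at hy ⊢
    tauto
  refine ⟨hy', ?_, ?_⟩
  · simp [SimpleGraph.Walk.takeUntil, Ne.symm hya]
  · simp [SimpleGraph.Walk.dropUntil, Ne.symm hya]

end DCaux
variable {W : Type*} {H : SimpleGraph W}
namespace DCaux2

lemma mem_tail {u v x : W} (r : H.Walk u v) (hx : x ∈ r.support) (hxu : x ≠ u) :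
    x ∈ r.support.tail := by
  rw [r.support_eq_cons] at hx
  exact (List.mem_cons.mp hx).resolve_left hxu

/-- arcs of a cycle are paths of length ≥ 1 -/
lemma cycle_arcs {a y : W} {c : H.Walk a a} (hc : c.IsCycle) (hy : y ∈ c.support)
    (hya : y ≠ a) :
    (c.takeUntil y hy).IsPath ∧ (c.dropUntil y hy).IsPath ∧
      1 ≤ (c.takeUntil y hy).length ∧ 1 ≤ (c.dropUntil y hy).length := by
  cases c with
  | nil => exact absurd rfl hc.ne_nil
  | cons ha q =>
    obtain ⟨hq, he⟩ := (cons_isCycle_iff _ _).mp hc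
    obtain ⟨hy', h1, h2⟩ := DCaux.takeUntil_cons ha q hy hya
    have htake : ((Walk.cons ha q).takeUntil y hy).IsPath := by
      rw [h1, cons_isPath_iff]
      refine ⟨hq.takeUntil hy', fun hmem => ?_⟩
      have hnd : q.support.Nodup := hq.support_nodup
      have hsupp : q.support = (q.takeUntil y hy').support ++ (q.dropUntil y hy').support.tail := by
        conv_lhs => rw [← q.take_spec hy']
        exact support_append _ _
      have hadrop : a ∈ (q.dropUntil y hy').support.tail :=
        mem_tail _ (q.dropUntil y hy').end_mem_support (Ne.symm hya)
      rw [hsupp] at hnd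
      exact (List.disjoint_of_nodup_append hnd) hmem hadrop
    refine ⟨htake, ?_, ?_, ?_⟩
    · rw [h2]; exact hq.dropUntil hy'
    · rw [h1]; simp [Nat.succ_le_succ]
    · rcases Nat.eq_zero_or_pos ((Walk.cons ha q).dropUntil y hy).length with h0 | h0
      · exact absurd (eq_of_length_eq_zero h0) hya
      · exact h0

/-- close a path whose two ends are joined to an outside vertex into a cycle -/
lemma close_cycle {v x y : W} (hxy : x ≠ y) (hvx : H.Adj v x) (hvy : H.Adj v y)
    (p : H.Walk x y) (hp : p.IsPath) (hv : v ∉ p.support) :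
    ∃ c : H.Walk v v, c.IsCycle ∧ c.length = p.length + 2 := by
  refine ⟨Walk.cons hvx (p.append (Walk.cons hvy.symm Walk.nil)), ?_, by simp⟩
  rw [cons_isCycle_iff]
  constructor
  · rw [isPath_def, support_append]
    simp only [support_cons, support_nil, List.tail_cons]
    rw [List.nodup_append]
    refine ⟨hp.support_nodup, List.nodup_singleton _, ?_⟩
    intro z hz z' hz' hzz
    rw [List.mem_singleton] at hz'
    subst hz'
    subst hzz
    exact hv hz
  · rw [edges_append]
    simp only [edges_cons, edges_nil, List.mem_append, List.mem_singleton]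
    rintro (hmem | hmem)
    · exact hv (p.fst_mem_support_of_mem_edges hmem)
    · rw [Sym2.eq_iff] at hmem
      rcases hmem with ⟨rfl, -⟩ | ⟨-, h2⟩
      · exact hvy.ne rfl
      · exact hxy h2

end DCaux2

namespace DCaux3

lemma cycle3 {a : W} {c : H.Walk a a} (hc : c.IsCycle) (h3 : c.length = 3) :
    ∃ b d : W, a ≠ b ∧ a ≠ d ∧ b ≠ d ∧ H.Adj a b ∧ H.Adj b d ∧ H.Adj d a ∧
      b ∈ c.support ∧ d ∈ c.support ∧ ∀ u ∈ c.support, u = a ∨ u = b ∨ u = d := by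
  have hnd := hc.support_nodup
  cases c with
  | nil => simp at h3
  | cons ha q =>
  cases q with
  | nil => simp at h3
  | cons hb q =>
  cases q with
  | nil => simp at h3
  | cons hd q =>
  cases q with
  | cons h q => simp only [Walk.length_cons] at h3; omega
  | nil =>
    rename_i b d
    simp only [support_cons, support_nil, List.tail_cons, List.nodup_cons, List.mem_cons,
      List.mem_singleton, List.not_mem_nil, or_false, List.nodup_singleton] at hnd
    refine ⟨b, d, by rintro rfl; simp_all, by rintro rfl; simp_all, by rintro rfl; simp_all,
      ha, hb, hd, by simp, by simp, ?_⟩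
    intro u hu
    simp only [support_cons, support_nil, List.mem_cons, List.mem_singleton] at hu
    tauto

lemma no_cycle4 (h4f : C4Free H) {a : W} {c : H.Walk a a} (hc : c.IsCycle) :
    c.length ≠ 4 := by
  intro h4
  have hnd := hc.support_nodup
  cases c with
  | nil => simp at h4
  | cons ha q =>
  cases q with
  | nil => simp at h4
  | cons hb q =>
  cases q with
  | nil => simp at h4
  | cons hd q =>
  cases q with
  | nil => simp at h4
  | cons he q =>
  cases q with
  | cons h q => simp only [Walk.length_cons] at h4; omega
  | nil =>
    rename_i b d e
    simp only [support_cons, support_nil, List.tail_cons, List.nodup_cons, List.mem_cons,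
      List.mem_singleton, List.not_mem_nil, or_false, List.nodup_singleton] at hnd
    exact h4f a b d e ha.ne (by rintro rfl; simp_all) (by rintro rfl; simp_all)
      (by rintro rfl; simp_all) (by rintro rfl; simp_all) (by rintro rfl; simp_all)
      ⟨ha, hb, hd, he⟩

end DCaux3
namespace DCaux4

lemma length_rotate {a u : W} (c : H.Walk a a) (h : u ∈ c.support) :
    (c.rotate _ h).length = c.length := by
  have := congrArg Walk.length (c.take_spec h)
  rw [length_append] at this
  rw [Walk.rotate, length_append]
  omega

lemma mem_support_closed_iff {a u : W} {c : H.Walk a a} (hnil : ¬ c.Nil) :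
    u ∈ c.support ↔ u ∈ c.support.tail := by
  constructor
  · intro hu
    by_cases hua : u = a
    · subst hua; cases c with
      | nil => simp at hnil
      | cons ha q => simpa using q.end_mem_support
    · exact DCaux2.mem_tail _ hu hua
  · intro hu
    rw [c.support_eq_cons]
    exact List.mem_cons_of_mem _ hu

lemma mem_support_rotate_iff {a u x : W} {c : H.Walk a a} (hc : c.IsCycle)
    (hx : x ∈ c.support) : u ∈ (c.rotate _ hx).support ↔ u ∈ c.support := by
  have h1 : ¬ c.Nil := hc.not_nil
  have h2 : ¬ (c.rotate _ hx).Nil := (hc.rotate hx).not_nil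
  rw [mem_support_closed_iff h1, mem_support_closed_iff h2]
  exact (c.support_rotate _ hx).mem_iff

/-- at most one neighbor of an outside vertex lies on a minimum cycle -/
lemma off_cycle (h4f : C4Free H) {a : W} {c : H.Walk a a} (hc : c.IsCycle)
    (hmin : ∀ (b : W) (d : H.Walk b b), d.IsCycle → c.length ≤ d.length)
    {v x y : W} (hv : v ∉ c.support) (hx : x ∈ c.support) (hy : y ∈ c.support)
    (hxy : x ≠ y) (hvx : H.Adj v x) (hvy : H.Adj v y) : False := by
  have h3 := hc.three_le_length
  have h4 := DCaux3.no_cycle4 h4f hc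
  by_cases hl3 : c.length = 3
  · obtain ⟨b, d, hab, had, hbd, hadj1, hadj2, hadj3, hbs, hds, hsupp⟩ := DCaux3.cycle3 hc hl3
    have hba := hab.symm; have hda := had.symm; have hdb := hbd.symm
    have hxm := hsupp x hx
    have hym := hsupp y hy
    have adj_all : ∀ p q : W, (p = a ∨ p = b ∨ p = d) → (q = a ∨ q = b ∨ q = d) →
        p ≠ q → H.Adj p q := by
      rintro p q (rfl | rfl | rfl) (rfl | rfl | rfl) hpq <;>
        first
          | exact absurd rfl hpq
          | exact hadj1 | exact hadj1.symm | exact hadj2 | exact hadj2.symm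
          | exact hadj3 | exact hadj3.symm
    obtain ⟨z, hzm, hzx, hzy⟩ : ∃ z, (z = a ∨ z = b ∨ z = d) ∧ z ≠ x ∧ z ≠ y := by
      rcases hxm with rfl | rfl | rfl <;> rcases hym with rfl | rfl | rfl <;>
        first
          | exact absurd rfl hxy
          | exact ⟨a, Or.inl rfl, by tauto, by tauto⟩
          | exact ⟨b, Or.inr (Or.inl rfl), by tauto, by tauto⟩
          | exact ⟨d, Or.inr (Or.inr rfl), by tauto, by tauto⟩
    have hzs : z ∈ c.support := by
      rcases hzm with rfl | rfl | rfl
      exacts [c.start_mem_support, hbs, hds]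
    have hvz : v ≠ z := fun h => hv (h ▸ hzs)
    exact h4f v x z y hvx.ne hvz hvy.ne (Ne.symm hzx) hxy hzy
      ⟨hvx, adj_all _ _ hxm hzm (Ne.symm hzx), adj_all _ _ hzm hym hzy, hvy.symm⟩
  · -- length ≥ 5
    have h5 : 5 ≤ c.length := by omega
    set c' := c.rotate _ hx with hc'def
    have hc' : c'.IsCycle := hc.rotate hx
    have hlen : c'.length = c.length := length_rotate c hx
    have hy' : y ∈ c'.support := (mem_support_rotate_iff hc hx).mpr hy
    have hv' : v ∉ c'.support := fun h => hv ((mem_support_rotate_iff hc hx).mp h)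
    obtain ⟨hp1, hp2, hl1, hl2⟩ := DCaux2.cycle_arcs hc' hy' hxy.symm
    have hsplit : (c'.takeUntil y hy').length + (c'.dropUntil y hy').length = c'.length := by
      have := congrArg Walk.length (c'.take_spec hy')
      rwa [length_append] at this
    have hv1 : v ∉ (c'.takeUntil y hy').support :=
      fun h => hv' (c'.support_takeUntil_subset hy' h)
    have hv2 : v ∉ (c'.dropUntil y hy').support :=
      fun h => hv' (c'.support_dropUntil_subset hy' h)
    have hA : c.length ≤ (c'.takeUntil y hy').length + 2 := by
      by_contra hlt
      push_neg at hlt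
      obtain ⟨cc, hcc, hlcc⟩ := DCaux2.close_cycle hxy hvx hvy _ hp1 hv1
      have := hmin v cc hcc
      omega
    have hB : c.length ≤ (c'.dropUntil y hy').length + 2 := by
      by_contra hlt
      push_neg at hlt
      obtain ⟨cc, hcc, hlcc⟩ := DCaux2.close_cycle hxy.symm hvy hvx _ hp2 hv2
      have := hmin v cc hcc
      omega
    omega

end DCaux4
namespace DCaux5

/-- a vertex on a minimum cycle has at most two neighbors on it -/
lemma chord (h4f : C4Free H) {a : W} {c : H.Walk a a} (hc : c.IsCycle)
    (hmin : ∀ (b : W) (d : H.Walk b b), d.IsCycle → c.length ≤ d.length)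
    {v y1 y2 y3 : W} (hv : v ∈ c.support)
    (hs1 : y1 ∈ c.support) (hs2 : y2 ∈ c.support) (hs3 : y3 ∈ c.support)
    (h12 : y1 ≠ y2) (h13 : y1 ≠ y3) (h23 : y2 ≠ y3)
    (ha1 : H.Adj v y1) (ha2 : H.Adj v y2) (ha3 : H.Adj v y3) : False := by
  have h3 := hc.three_le_length
  have h4 := DCaux3.no_cycle4 h4f hc
  set c' := c.rotate _ hv with hc'def
  have hc' : c'.IsCycle := hc.rotate hv
  have hlen : c'.length = c.length := DCaux4.length_rotate c hv
  have hmem : ∀ u, u ∈ c.support → u ∈ c'.support :=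
    fun u hu => (DCaux4.mem_support_rotate_iff hc hv).mpr hu
  -- key : every neighbor on the cycle is at distance 1 or n-1 along the cycle
  have key : ∀ y (hy : y ∈ c'.support), y ≠ v → H.Adj v y →
      y = c'.getVert 1 ∨ y = c'.getVert (c'.length - 1) := by
    intro y hy hyv hadj
    obtain ⟨hp1, hp2, hl1, hl2⟩ := DCaux2.cycle_arcs hc' hy hyv
    have hsplit : (c'.takeUntil y hy).length + (c'.dropUntil y hy).length = c'.length := by
      have := congrArg Walk.length (c'.take_spec hy)
      rwa [length_append] at this
    have hgv : ∀ i, c'.getVert i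
        = ((c'.takeUntil y hy).append (c'.dropUntil y hy)).getVert i := by
      intro i; rw [c'.take_spec hy]
    have hcase : (c'.takeUntil y hy).length = 1 ∨ (c'.dropUntil y hy).length = 1 := by
      by_contra hcon
      push_neg at hcon
      have hd1 : 2 ≤ (c'.takeUntil y hy).length := by omega
      have hd2 : 2 ≤ (c'.dropUntil y hy).length := by omega
      have hedges : c'.edges = (c'.takeUntil y hy).edges ++ (c'.dropUntil y hy).edges := by
        conv_lhs => rw [← c'.take_spec hy]
        exact edges_append _ _
      have hnd : c'.edges.Nodup := hc'.isTrail.edges_nodup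
      rw [hedges] at hnd
      have hnotboth := List.disjoint_of_nodup_append hnd
      by_cases hmem2 : s(v, y) ∈ (c'.dropUntil y hy).edges
      · -- use the takeUntil arc
        have hnot1 : s(y, v) ∉ (c'.takeUntil y hy).edges := by
          rw [Sym2.eq_swap]
          exact fun h => hnotboth h hmem2
        have hcyc : (Walk.cons hadj.symm (c'.takeUntil y hy)).IsCycle :=
          (cons_isCycle_iff _ _).mpr ⟨hp1, hnot1⟩
        have := hmin y _ hcyc
        simp only [Walk.length_cons] at this
        omega
      · have hcyc : (Walk.cons hadj (c'.dropUntil y hy)).IsCycle :=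
          (cons_isCycle_iff _ _).mpr ⟨hp2, hmem2⟩
        have := hmin v _ hcyc
        simp only [Walk.length_cons] at this
        omega
    rcases hcase with h1 | h1
    · left
      rw [hgv 1, getVert_append, h1]
      simp
    · right
      have hteq : (c'.takeUntil y hy).length = c'.length - 1 := by omega
      rw [hgv (c'.length - 1), getVert_append, hteq]
      have : ¬ (c'.length - 1 < c'.length - 1) := lt_irrefl _
      rw [if_neg this]
      simp
  have hy1 := key y1 (hmem _ hs1) ha1.ne' ha1
  have hy2 := key y2 (hmem _ hs2) ha2.ne' ha2
  have hy3 := key y3 (hmem _ hs3) ha3.ne' ha3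
  rcases hy1 with h | h <;> rcases hy2 with h' | h' <;> rcases hy3 with h'' | h'' <;>
    simp_all
end DCaux5
namespace DCaux6

/-- a finite nonempty graph with min degree 2 has a cycle -/
lemma exists_cycle [Fintype W] [Nonempty W] (H : SimpleGraph W)
    (hdeg : ∀ v : W, 2 ≤ H.degree v) : ∃ (a : W) (c : H.Walk a a), c.IsCycle := by
  classical
  -- take a path of maximum length
  have hP : ∃ (u v : W) (p : H.Walk u v), p.IsPath ∧ p.length = 0 := by
    obtain ⟨u⟩ := ‹Nonempty W›
    exact ⟨u, u, Walk.nil, by simp, rfl⟩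
  set Q : ℕ → Prop := fun n => ∃ (u v : W) (p : H.Walk u v), p.IsPath ∧ p.length = n with hQ
  have hQ0 : Q 0 := by obtain ⟨u, v, p, h1, h2⟩ := hP; exact ⟨u, v, p, h1, h2⟩
  have hbound : ∀ n, Q n → n ≤ Fintype.card W := by
    rintro n ⟨u, v, p, hp, rfl⟩
    exact le_of_lt hp.length_lt
  set N := Nat.findGreatest Q (Fintype.card W) with hN
  have hQN : Q N := Nat.findGreatest_spec (Nat.zero_le _) hQ0
  have hmax : ∀ (u v : W) (p : H.Walk u v), p.IsPath → p.length ≤ N := by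
    intro u v p hp
    exact Nat.le_findGreatest (hbound _ ⟨u, v, p, hp, rfl⟩) ⟨u, v, p, hp, rfl⟩
  obtain ⟨u, v, p, hp, hplen⟩ := hQN
  -- all neighbors of u are on p
  have hnb : ∀ w, H.Adj u w → w ∈ p.support := by
    intro w hw
    by_contra hws
    have : (Walk.cons hw.symm p).IsPath := (cons_isPath_iff _ _).mpr ⟨hp, hws⟩
    have := hmax _ _ _ this
    simp only [Walk.length_cons] at this
    omega
  -- u has two distinct neighbors
  have hdeg2 : 1 < (H.neighborFinset u).card := by
    rw [H.card_neighborFinset_eq_degree]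
    have := hdeg u
    omega
  obtain ⟨w1, hw1, w2, hw2, hne⟩ := Finset.one_lt_card.mp hdeg2
  rw [H.mem_neighborFinset] at hw1 hw2
  -- one of them is not the second vertex of p
  obtain ⟨y, hy, hysnd⟩ : ∃ y, H.Adj u y ∧ y ≠ p.getVert 1 := by
    by_cases h1 : w1 = p.getVert 1
    · refine ⟨w2, hw2, fun h => hne ?_⟩
      rw [h1, h]
    · exact ⟨w1, hw1, h1⟩
  have hys : y ∈ p.support := hnb y hy
  have hedge : s(u, y) ∉ (p.takeUntil y hys).edges := by
    intro h
    exact hysnd (DCaux.edge_start hp (p.edges_takeUntil_subset hys h))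
  refine ⟨y, Walk.cons hy.symm (p.takeUntil y hys), (cons_isCycle_iff _ _).mpr ⟨hp.takeUntil hys, ?_⟩⟩
  rwa [Sym2.eq_swap]
end DCaux6

namespace DCmain
variable {V : Type*}

lemma degree_induce [Fintype V] (G : SimpleGraph V) (S : Finset V) (x : ↥(S : Set V)) :
    (G.induce (S : Set V)).degree x = nbrIn G S ↑x := by
  classical
  rw [← SimpleGraph.card_neighborFinset_eq_degree, nbrIn]
  refine Finset.card_bij (fun (y : ↥(S : Set V)) (_ : y ∈ (G.induce (S : Set V)).neighborFinset x) => (y : V)) ?_ ?_ ?_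
  · intro y hy
    rw [SimpleGraph.mem_neighborFinset] at hy
    simp only [Finset.mem_filter]
    exact ⟨y.2, hy⟩
  · intro y1 h1 y2 h2 h
    exact Subtype.ext h
  · intro z hz
    simp only [Finset.mem_filter] at hz
    refine ⟨⟨z, hz.1⟩, ?_, rfl⟩
    rw [SimpleGraph.mem_neighborFinset]
    exact hz.2

lemma c4free_induce {G : SimpleGraph V} (h : C4Free G) (s : Set V) :
    C4Free (G.induce s) := by
  intro w x y z hwx hwy hwz hxy hxz hyz ⟨h1, h2, h3, h4⟩
  exact h ↑w ↑x ↑y ↑z (fun e => hwx (Subtype.ext e)) (fun e => hwy (Subtype.ext e))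
    (fun e => hwz (Subtype.ext e)) (fun e => hxy (Subtype.ext e))
    (fun e => hxz (Subtype.ext e)) (fun e => hyz (Subtype.ext e)) ⟨h1, h2, h3, h4⟩

lemma main [Fintype V] (G : SimpleGraph V) (hC4 : C4Free G) :
    ∀ (k : ℕ) (S : Finset V), (∀ x ∈ S, k + 1 ≤ nbrIn G S x) → (k = 0 ∨ S.Nonempty) →
    ∃ L : List (Σ v : V, G.Walk v v), L.length = k ∧
      (∀ p ∈ L, p.2.IsCycle ∧ ∀ v ∈ p.2.support, v ∈ S) ∧
      L.Pairwise (fun p q => ∀ v, v ∈ p.2.support → v ∉ q.2.support) := by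
  intro k
  induction k with
  | zero => intro S _ _; exact ⟨[], rfl, by simp, by simp⟩
  | succ k ih =>
    intro S hdeg hne
    rcases hne with h0 | hSne
    · exact absurd h0 (Nat.succ_ne_zero k)
    classical
    haveI : Nonempty ↥(S : Set V) := by
      obtain ⟨x, hx⟩ := hSne
      exact ⟨⟨x, by simpa using hx⟩⟩
    set H := G.induce (S : Set V) with hHdef
    have hH4 : C4Free H := c4free_induce hC4 _
    have hHdeg : ∀ v : ↥(S : Set V), 2 ≤ H.degree v := by
      intro v
      rw [degree_induce]
      have := hdeg ↑v (by exact_mod_cast v.2)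
      omega
    obtain ⟨a0, c0, hc0⟩ := DCaux6.exists_cycle H hHdeg
    have hnac : ¬ H.IsAcyclic := fun h => h _ hc0
    obtain ⟨a, w, hw, hlen⟩ := SimpleGraph.exists_egirth_eq_length.mpr hnac
    have hmin : ∀ (b : ↥(S : Set V)) (d : H.Walk b b), d.IsCycle → w.length ≤ d.length := by
      intro b d hd
      have h1 : H.egirth ≤ d.length := SimpleGraph.le_egirth.mp le_rfl b d hd
      rw [hlen] at h1
      exact_mod_cast h1
    set f := SimpleGraph.Embedding.induce (G := G) (S : Set V) with hfdef
    set c1 : G.Walk ↑a ↑a := w.map f.toHom with hc1def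
    have hc1 : c1.IsCycle := hw.map f.injective
    have hsupp1 : ∀ v : V, v ∈ c1.support ↔ ∃ u : ↥(S : Set V), u ∈ w.support ∧ ↑u = v := by
      intro v
      change v ∈ (w.map f.toHom).support ↔ _
      rw [Walk.support_map, List.mem_map]
      constructor
      · rintro ⟨u, hu, rfl⟩; exact ⟨u, hu, rfl⟩
      · rintro ⟨u, hu, rfl⟩; exact ⟨u, hu, rfl⟩
    have hsuppS : ∀ v ∈ c1.support, v ∈ S := by
      intro v hv
      obtain ⟨u, _, rfl⟩ := (hsupp1 v).mp hv
      exact_mod_cast u.2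
    set S' := S \ c1.support.toFinset with hS'def
    have hnotin : ∀ x : ↥(S : Set V), (↑x : V) ∉ c1.support → x ∉ w.support := by
      intro x hx hxw
      exact hx ((hsupp1 _).mpr ⟨x, hxw, rfl⟩)
    have hin : ∀ (y : V) (hy : y ∈ S), y ∈ c1.support → (⟨y, by simpa using hy⟩ : ↥(S : Set V)) ∈ w.support := by
      intro y hy hyc
      obtain ⟨u, hu, hval⟩ := (hsupp1 y).mp hyc
      have : u = ⟨y, by simpa using hy⟩ := Subtype.ext hval
      rwa [this] at hu
    have hdeg' : ∀ x ∈ S', k + 1 ≤ nbrIn G S' x := by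
      intro x hx
      rw [hS'def, Finset.mem_sdiff, List.mem_toFinset] at hx
      obtain ⟨hxS, hxc⟩ := hx
      have hcap : ((S.filter fun y => G.Adj x y) ∩ c1.support.toFinset).card ≤ 1 := by
        by_contra hcon
        push_neg at hcon
        obtain ⟨y1, hy1, y2, hy2, hne12⟩ := Finset.one_lt_card.mp hcon
        simp only [Finset.mem_inter, Finset.mem_filter, List.mem_toFinset] at hy1 hy2
        have hx' : (⟨x, by simpa using hxS⟩ : ↥(S : Set V)) ∉ w.support := hnotin _ hxc
        exact DCaux4.off_cycle hH4 hw hmin hx'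
          (hin y1 hy1.1.1 hy1.2) (hin y2 hy2.1.1 hy2.2)
          (fun h => hne12 (by exact congrArg Subtype.val h)) hy1.1.2 hy2.1.2
      have hsub : (S.filter fun y => G.Adj x y) ⊆
          (S'.filter fun y => G.Adj x y) ∪ ((S.filter fun y => G.Adj x y) ∩ c1.support.toFinset) := by
        intro y hy
        simp only [Finset.mem_filter] at hy
        by_cases hyc : y ∈ c1.support
        · simp only [Finset.mem_union, Finset.mem_inter, Finset.mem_filter, List.mem_toFinset]
          exact Or.inr ⟨⟨hy.1, hy.2⟩, hyc⟩
        · simp only [Finset.mem_union, Finset.mem_filter, hS'def, Finset.mem_sdiff,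
            List.mem_toFinset]
          exact Or.inl ⟨⟨hy.1, hyc⟩, hy.2⟩
      have h1 := Finset.card_le_card hsub
      have h2 := Finset.card_union_le ((S'.filter fun y => G.Adj x y))
        ((S.filter fun y => G.Adj x y) ∩ c1.support.toFinset)
      have h3 := hdeg x hxS
      rw [nbrIn] at h3 ⊢
      omega
    have hk' : k = 0 ∨ S'.Nonempty := by
      rcases Nat.eq_zero_or_pos k with rfl | hk
      · exact Or.inl rfl
      right
      by_contra hemp
      rw [Finset.not_nonempty_iff_eq_empty, hS'def, Finset.sdiff_eq_empty_iff_subset] at hemp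
      have haS : (↑a : V) ∈ S := by exact_mod_cast a.2
      have h3le : 2 < (S.filter fun y => G.Adj ↑a y).card := by
        have := hdeg ↑a haS
        rw [nbrIn] at this
        omega
      obtain ⟨y1, y2, y3, hy1, hy2, hy3, h12, h13, h23⟩ := Finset.two_lt_card_iff.mp h3le
      simp only [Finset.mem_filter] at hy1 hy2 hy3
      have hyc : ∀ y, y ∈ S → y ∈ c1.support := by
        intro y hy
        have := hemp hy
        rwa [List.mem_toFinset] at this
      exact DCaux5.chord hH4 hw hmin w.start_mem_support
        (hin y1 hy1.1 (hyc _ hy1.1)) (hin y2 hy2.1 (hyc _ hy2.1)) (hin y3 hy3.1 (hyc _ hy3.1))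
        (fun h => h12 (by exact congrArg Subtype.val h))
        (fun h => h13 (by exact congrArg Subtype.val h))
        (fun h => h23 (by exact congrArg Subtype.val h))
        hy1.2 hy2.2 hy3.2
    obtain ⟨L', hlenL, hmemL, hpwL⟩ := ih S' hdeg' hk'
    refine ⟨⟨↑a, c1⟩ :: L', by simp [hlenL], ?_, ?_⟩
    · rintro p hp
      rcases List.mem_cons.mp hp with rfl | hp'
      · exact ⟨hc1, hsuppS⟩
      · obtain ⟨h1, h2⟩ := hmemL p hp'
        refine ⟨h1, fun v hv => ?_⟩
        have := h2 v hv
        rw [hS'def, Finset.mem_sdiff] at this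
        exact this.1
    · rw [List.pairwise_cons]
      refine ⟨?_, hpwL⟩
      intro q hq v hv1 hv2
      have := (hmemL q hq).2 v hv2
      rw [hS'def, Finset.mem_sdiff, List.mem_toFinset] at this
      exact this.2 hv1

end DCmain

end Helpers

/-- Any `C4`-free graph with minimum degree at least `k+1` contains `k` pairwise
vertex-disjoint cycles. -/
theorem disjoint_cycles [Fintype V] [Nonempty V] (G : SimpleGraph V) (k : ℕ) (hk : 1 ≤ k)
    (hC4 : C4Free G) (hdeg : ∀ x : V, k + 1 ≤ G.degree x) :
    ∃ (u : Fin k → V) (c : ∀ i, G.Walk (u i) (u i)),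
      (∀ i, (c i).IsCycle) ∧
      ∀ i j, i ≠ j → ∀ v : V, v ∈ (c i).support → v ∉ (c j).support := by
  classical
  have huniv : ∀ x ∈ (Finset.univ : Finset V), k + 1 ≤ nbrIn G Finset.univ x := by
    intro x _
    have h := hdeg x
    have heq : nbrIn G Finset.univ x = G.degree x := by
      rw [nbrIn, ← SimpleGraph.card_neighborFinset_eq_degree]
      congr 1
      ext y
      simp [SimpleGraph.mem_neighborFinset]
    omega
  obtain ⟨L, hL, hmem, hpw⟩ := DCmain.main G hC4 k Finset.univ huniv (Or.inr Finset.univ_nonempty)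
  refine ⟨fun i => (L.get (Fin.cast hL.symm i)).1, fun i => (L.get (Fin.cast hL.symm i)).2, ?_, ?_⟩
  · intro i
    exact (hmem _ (L.get_mem _)).1
  · intro i j hij v hvi hvj
    have hvalne : i.val ≠ j.val := fun h => hij (Fin.ext h)
    have hij' : (Fin.cast hL.symm i) ≠ (Fin.cast hL.symm j) := by
      intro h
      apply hvalne
      have := congrArg Fin.val h
      simpa using this
    rcases lt_or_gt_of_ne hij' with h | h
    · exact (List.pairwise_iff_get.mp hpw _ _ h) v hvi hvj
    · exact (List.pairwise_iff_get.mp hpw _ _ h) v hvj hvi
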